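/- Let S = {(U_i, V_i)}_{i=1}^N be i.i.d. bivariate random variables with U_i independent of V_i, Lipschitz continuous joint CDF, and invertible marginal CDFs (so the copula is C(u, v) = uv). Then E[|Pareto(S)|] = Θ(log N) as N → ∞. -/

import Mathlib

open MeasureTheory ProbabilityTheory Filter Asymptotics Set

/-- A point indexed by `i` is maximal (Pareto-optimal) within the indexed family `p`. -/
def IsParetoPoint {N : ℕ} (p : Fin N → ℝ × ℝ) (i : Fin N) : Prop :=
  ∀ j : Fin N, (p j).2 > (p i).2 → (p i).1 > (p j).1

/-- The number of Pareto-optimal points of the indexed family `p`. -/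
noncomputable def paretoCard {N : ℕ} (p : Fin N → ℝ × ℝ) : ℕ :=
  Set.ncard {i : Fin N | IsParetoPoint p i}


/- ===== Auxiliary lemmas ===== -/

open intervalIntegral in
lemma paretoAux_inner_int (n : ℕ) (t : ℝ) :
    ∫ s in (0:ℝ)..1, (1 - (1-s)*(1-t))^n = (∑ k ∈ Finset.range (n+1), t^k) / (n+1) := by
  have h1 : ∫ s in (0:ℝ)..1, (1 - (1-s)*(1-t))^n
      = ∫ u in (0:ℝ)..1, (1 - u*(1-t))^n := by
    have := intervalIntegral.integral_comp_sub_left (a := (0:ℝ)) (b := 1)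
      (fun u => (1 - u*(1-t))^n) 1
    simpa using this
  rw [h1]
  set c := 1 - t with hc
  rcases eq_or_ne c 0 with h0 | h0
  · have ht : t = 1 := by linarith [hc ▸ h0]
    simp [h0, ht]
    rw [eq_comm, div_eq_one_iff_eq (by positivity : ((n:ℝ)+1) ≠ 0)]
  · have hF : ∀ u ∈ Set.uIcc (0:ℝ) 1, HasDerivAt (fun u => -(1-u*c)^(n+1) / ((n+1)*c))
        ((1 - u*c)^n) u := by
      intro u _
      have h2 : HasDerivAt (fun u : ℝ => 1 - u*c) (-c) u := by
        simpa using ((hasDerivAt_id u).mul_const c).const_sub 1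
      have h3 : HasDerivAt (fun u : ℝ => (1-u*c)^(n+1))
          ((n+1) * (1-u*c)^n * (-c)) u := by
        simpa using (h2.fun_pow (n+1))
      have h4 := (h3.fun_neg).div_const ((n+1)*c)
      refine h4.congr_deriv ?_
      rw [div_eq_iff (mul_ne_zero (by positivity) h0)]
      ring
    have hcont : IntervalIntegrable (fun u : ℝ => (1-u*c)^n) volume 0 1 :=
      (by continuity : Continuous (fun u : ℝ => (1-u*c)^n)).intervalIntegrable 0 1
    rw [intervalIntegral.integral_eq_sub_of_hasDerivAt hF hcont]
    have hgeom : ∑ k ∈ Finset.range (n+1), t^k = (t^(n+1) - 1)/(t - 1) := by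
      exact geom_sum_eq (by intro h; exact h0 (by rw [hc, h]; ring)) (n+1)
    rw [hgeom]
    have hne : (n:ℝ) + 1 ≠ 0 := by positivity
    have ht1 : t - 1 ≠ 0 := fun h => h0 (by rw [hc]; linarith)
    have htc : t = 1 - c := by rw [hc]; ring
    rw [htc]
    rw [div_sub_div_same, div_div, div_eq_div_iff (mul_ne_zero hne h0) (mul_ne_zero (by rw [← htc]; exact ht1) hne)]
    ring

open intervalIntegral in
lemma paretoAux_outer_int (n : ℕ) :
    ∫ t in (0:ℝ)..1, (∫ s in (0:ℝ)..1, (1 - (1-s)*(1-t))^n)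
      = (harmonic (n+1) : ℝ) / (n+1) := by
  rw [intervalIntegral.integral_congr (g := fun t => (∑ k ∈ Finset.range (n+1), t^k) / (n+1))
    (fun t _ => paretoAux_inner_int n t)]
  have : ∀ t : ℝ, (∑ k ∈ Finset.range (n+1), t^k) / (n+1)
      = ∑ k ∈ Finset.range (n+1), t^k * ((n:ℝ)+1)⁻¹ := by
    intro t; rw [Finset.sum_div]; exact Finset.sum_congr rfl fun k _ => div_eq_mul_inv _ _
  simp_rw [this]
  rw [intervalIntegral.integral_finset_sum (f := fun k (t : ℝ) => t^k * ((n:ℝ)+1)⁻¹) (fun k _ =>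
    ((continuous_pow k).mul continuous_const).intervalIntegrable 0 1)]
  have hk : ∀ k ∈ Finset.range (n+1), ∫ t in (0:ℝ)..1, t^k * ((n:ℝ)+1)⁻¹
      = ((k:ℝ)+1)⁻¹ * ((n:ℝ)+1)⁻¹ := by
    intro k _
    rw [intervalIntegral.integral_mul_const, integral_pow]
    norm_num
  rw [Finset.sum_congr rfl hk, ← Finset.sum_mul]
  have : (harmonic (n+1) : ℝ) = ∑ k ∈ Finset.range (n+1), ((k:ℝ)+1)⁻¹ := by
    simp [harmonic]
  rw [this, div_eq_mul_inv]

lemma paretoAux_outer_int' (n : ℕ) :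
    ∫ t in (0:ℝ)..1, (∫ s in (0:ℝ)..1, (1 - (1-t)*(1-s))^n)
      = (harmonic (n+1) : ℝ) / (n+1) := by
  rw [← paretoAux_outer_int n]
  exact intervalIntegral.integral_congr fun t _ =>
    intervalIntegral.integral_congr fun s _ => by ring_nf

noncomputable def paretoUnif : Measure ℝ := volume.restrict (Set.Ioo 0 1)

instance : IsProbabilityMeasure paretoUnif := ⟨by simp [paretoUnif, Real.volume_Ioo]⟩

noncomputable def paretoEta : Measure (ℝ × ℝ) := paretoUnif.prod paretoUnif

instance : IsProbabilityMeasure paretoEta := by unfold paretoEta; infer_instance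

lemma paretoUnif_Iic (a : ℝ) : paretoUnif (Iic a) = ENNReal.ofReal (min a 1) := by
  rw [paretoUnif, Measure.restrict_apply measurableSet_Iic]
  rcases le_or_gt a 0 with h | h
  · have : Iic a ∩ Ioo 0 1 = ∅ := by
      ext x; simp only [mem_inter_iff, mem_Iic, mem_Ioo, mem_empty_iff_false, iff_false]
      rintro ⟨h1, h2, _⟩; linarith
    rw [this]; simp [min_eq_left (by linarith : a ≤ 1), ENNReal.ofReal_eq_zero.2 h]
  rcases lt_or_ge a 1 with h1 | h1
  · have : Iic a ∩ Ioo 0 1 = Ioc 0 a := by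
      ext x; simp only [mem_inter_iff, mem_Iic, mem_Ioo, mem_Ioc]
      constructor
      · rintro ⟨hx, hx0, _⟩; exact ⟨hx0, hx⟩
      · rintro ⟨hx0, hx⟩; exact ⟨hx, hx0, by linarith⟩
    rw [this, Real.volume_Ioc, min_eq_left h1.le]; norm_num
  · have : Iic a ∩ Ioo 0 1 = Ioo 0 1 := by
      ext x; simp only [mem_inter_iff, mem_Iic, mem_Ioo]
      exact ⟨fun h => h.2, fun hx => ⟨by linarith [hx.2], hx⟩⟩
    rw [this, Real.volume_Ioo, min_eq_right h1]; norm_num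

lemma paretoUnif_Ici {u : ℝ} (h : 0 < u) : paretoUnif (Ici u) = ENNReal.ofReal (1 - u) := by
  rw [paretoUnif, Measure.restrict_apply measurableSet_Ici]
  have : Ici u ∩ Ioo 0 1 = Ico u 1 := by
    ext x; simp only [mem_inter_iff, mem_Ici, mem_Ioo, mem_Ico]
    exact ⟨fun ⟨h1, _, h3⟩ => ⟨h1, h3⟩, fun ⟨h1, h2⟩ => ⟨h1, lt_of_lt_of_le h h1, h2⟩⟩
  rw [this, Real.volume_Ico]

lemma paretoUnif_Ioi {v : ℝ} (h : 0 < v) : paretoUnif (Ioi v) = ENNReal.ofReal (1 - v) := by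
  rw [paretoUnif, Measure.restrict_apply measurableSet_Ioi]
  have : Ioi v ∩ Ioo 0 1 = Ioo v 1 := by
    ext x; simp only [mem_inter_iff, mem_Ioi, mem_Ioo]
    exact ⟨fun ⟨h1, _, h3⟩ => ⟨h1, h3⟩, fun ⟨h1, h2⟩ => ⟨h1, h.trans h1, h2⟩⟩
  rw [this, Real.volume_Ioo]

lemma paretoAux_map_eq_unif {Ω : Type*} [MeasurableSpace Ω] (μ : Measure Ω)
    [IsProbabilityMeasure μ]
    (T : Ω → ℝ) (hT : Measurable T) (G : ℝ → ℝ) (hmono : StrictMono G)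
    (hrange : Set.range G = Set.Ioo 0 1)
    (hcdf : ∀ b, (μ {ω | T ω ≤ b}).toReal = G b) :
    μ.map (fun ω => G (T ω)) = paretoUnif := by
  have hGmeas : Measurable G := hmono.monotone.measurable
  have hGT : Measurable (fun ω => G (T ω)) := hGmeas.comp hT
  have hmem : ∀ x, G x ∈ Ioo (0:ℝ) 1 := fun x => hrange ▸ mem_range_self x
  have : IsProbabilityMeasure (μ.map (fun ω => G (T ω))) :=
    Measure.isProbabilityMeasure_map hGT.aemeasurable
  refine Measure.ext_of_Iic _ _ (fun a => ?_)
  rw [Measure.map_apply hGT measurableSet_Iic, paretoUnif_Iic]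
  rcases le_or_gt a 0 with h | h
  · have : (fun ω => G (T ω)) ⁻¹' Iic a = ∅ := by
      ext ω; simp only [mem_preimage, mem_Iic, mem_empty_iff_false, iff_false, not_le]
      exact lt_of_le_of_lt h (hmem (T ω)).1
    rw [this]; simp [min_eq_left (by linarith : a ≤ 1), ENNReal.ofReal_eq_zero.2 h]
  rcases lt_or_ge a 1 with h1 | h1
  · obtain ⟨b, hb⟩ : a ∈ Set.range G := hrange ▸ Set.mem_Ioo.2 ⟨h, h1⟩
    have : (fun ω => G (T ω)) ⁻¹' Iic a = {ω | T ω ≤ b} := by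
      ext ω; simp only [mem_preimage, mem_Iic, mem_setOf_eq, ← hb]
      exact hmono.le_iff_le
    rw [this, min_eq_left h1.le, ← hb, ← hcdf b, ENNReal.ofReal_toReal (measure_ne_top μ _)]
  · have : (fun ω => G (T ω)) ⁻¹' Iic a = Set.univ := by
      ext ω; simp only [mem_preimage, mem_Iic, mem_univ, iff_true]
      exact le_trans (hmem (T ω)).2.le h1
    rw [this, min_eq_right h1, measure_univ]; norm_num

lemma paretoAux_map_pi {Ω : Type*} [MeasurableSpace Ω] (μ : Measure Ω) [IsProbabilityMeasure μ]
    (X : ℕ → Ω → ℝ × ℝ) (hX : ∀ i, Measurable (X i))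
    (hind : iIndepFun X μ)
    (η : Measure (ℝ × ℝ)) [IsProbabilityMeasure η] (hlaw : ∀ i, μ.map (X i) = η) (N : ℕ) :
    μ.map (fun ω (i : Fin N) => X i ω) = Measure.pi (fun _ : Fin N => η) := by
  have hYmeas : Measurable (fun ω (i : Fin N) => X i ω) :=
    measurable_pi_lambda _ (fun i => hX i)
  refine (Measure.pi_eq (μ := fun _ : Fin N => η) fun s hs => ?_).symm
  rw [Measure.map_apply hYmeas (MeasurableSet.univ_pi hs)]
  have hpre : (fun ω (i : Fin N) => X i ω) ⁻¹' (Set.pi univ s) = ⋂ i : Fin N, X i ⁻¹' s i := by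
    ext ω; simp [Set.mem_pi]
  rw [hpre]
  set t : ℕ → Set Ω := fun j => if h : j < N then X j ⁻¹' (s ⟨j, h⟩) else Set.univ with ht
  have hiInter : (⋂ i : Fin N, X i ⁻¹' s i) = ⋂ j ∈ Finset.range N, t j := by
    ext ω
    simp only [mem_iInter, mem_preimage, Finset.mem_range, ht]
    constructor
    · intro h j hj
      simp only [dif_pos hj]
      exact h ⟨j, hj⟩
    · intro h i
      have := h i.1 i.2
      simpa only [dif_pos i.2, Fin.eta, Set.mem_preimage] using this
  rw [hiInter, hind.meas_biInter (fun j hj => ?_)]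
  · set f : ℕ → ENNReal := fun j => if h : j < N then η (s ⟨j, h⟩) else 1 with hf
    have h1 : ∀ j ∈ Finset.range N, μ (t j) = f j := by
      intro j hj
      rw [Finset.mem_range] at hj
      simp only [ht, hf, dif_pos hj]
      rw [← Measure.map_apply (hX j) (hs _), hlaw j]
    rw [Finset.prod_congr rfl h1]
    have h2 : ∀ i : Fin N, η (s i) = f i.1 := by
      intro i; simp only [hf, dif_pos i.2, Fin.eta]
    calc ∏ j ∈ Finset.range N, f j = ∏ i : Fin N, f i.1 := by
          rw [Fin.prod_univ_eq_prod_range]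
      _ = ∏ i : Fin N, η (s i) := by
          exact Finset.prod_congr rfl (fun i _ => (h2 i).symm)
  · rw [Finset.mem_range] at hj
    simp only [ht, dif_pos hj]
    exact ⟨s ⟨j, hj⟩, hs _, rfl⟩

lemma paretoAux_measurableSet_pareto {N : ℕ} (i : Fin N) :
    MeasurableSet {p : Fin N → ℝ × ℝ | IsParetoPoint p i} := by
  have h1 : ∀ k : Fin N, Measurable fun p : Fin N → ℝ × ℝ => (p k).1 :=
    fun k => (measurable_pi_apply k).fst
  have h2 : ∀ k : Fin N, Measurable fun p : Fin N → ℝ × ℝ => (p k).2 :=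
    fun k => (measurable_pi_apply k).snd
  have : {p : Fin N → ℝ × ℝ | IsParetoPoint p i}
      = ⋂ j, ({p : Fin N → ℝ × ℝ | (p i).2 < (p j).2 ∧ (p i).1 ≤ (p j).1})ᶜ := by
    ext p
    simp only [mem_setOf_eq, IsParetoPoint, mem_iInter, mem_compl_iff, not_and, not_le]
  rw [this]
  exact MeasurableSet.iInter fun j =>
    ((measurableSet_lt (h2 i) (h2 j)).inter (measurableSet_le (h1 i) (h1 j))).compl

lemma paretoAux_eta_A {x : ℝ × ℝ} (hx : x ∈ Ioo (0:ℝ) 1 ×ˢ Ioo (0:ℝ) 1) :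
    paretoEta {q : ℝ × ℝ | q.2 > x.2 → x.1 > q.1}
      = ENNReal.ofReal (1 - (1 - x.1) * (1 - x.2)) := by
  obtain ⟨⟨h11, h12⟩, h21, h22⟩ := hx
  have hset : {q : ℝ × ℝ | q.2 > x.2 → x.1 > q.1} = (Ici x.1 ×ˢ Ioi x.2)ᶜ := by
    ext q
    simp only [mem_setOf_eq, mem_compl_iff, mem_prod, mem_Ici, mem_Ioi, not_and, not_lt]
    constructor
    · intro h h1
      by_contra h2
      exact absurd (h (lt_of_not_ge h2)) (not_lt.2 h1)
    · intro h h1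
      by_contra h2
      exact absurd h1 (not_lt.2 (h (not_lt.1 h2)))
  rw [hset, measure_compl ((measurableSet_Ici.prod measurableSet_Ioi)) (measure_ne_top _ _),
    measure_univ, paretoEta, Measure.prod_prod, paretoUnif_Ici h11, paretoUnif_Ioi h21,
    ← ENNReal.ofReal_mul (by linarith), ← ENNReal.ofReal_one,
    ← ENNReal.ofReal_sub _ (by nlinarith)]

lemma paretoAux_prob (n : ℕ) (i : Fin (n+1)) :
    Measure.pi (fun _ : Fin (n+1) => paretoEta) {p | IsParetoPoint p i}
      = ENNReal.ofReal ((harmonic (n+1) : ℝ) / (n+1)) := by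
  set π' := Measure.pi (fun _ : Fin n => paretoEta) with hπ'
  have hmp := measurePreserving_piFinSuccAbove (fun _ : Fin (n+1) => paretoEta) i
  set e := MeasurableEquiv.piFinSuccAbove (fun _ : Fin (n+1) => ℝ × ℝ) i with he
  set S : Set ((ℝ × ℝ) × (Fin n → ℝ × ℝ)) :=
    {xy | ∀ j, (xy.2 j).2 > xy.1.2 → xy.1.1 > (xy.2 j).1} with hS
  have hSmeas : MeasurableSet S := by
    have : S = ⋂ j, ({xy : (ℝ × ℝ) × (Fin n → ℝ × ℝ) |
        xy.1.2 < (xy.2 j).2 ∧ xy.1.1 ≤ (xy.2 j).1})ᶜ := by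
      ext xy
      simp only [hS, mem_setOf_eq, mem_iInter, mem_compl_iff, not_and, not_le]
    rw [this]
    refine MeasurableSet.iInter fun j => (MeasurableSet.inter ?_ ?_).compl
    · exact measurableSet_lt (measurable_fst.snd)
        (((measurable_pi_apply j).comp measurable_snd).snd)
    · exact measurableSet_le (measurable_fst.fst)
        (((measurable_pi_apply j).comp measurable_snd).fst)
  have hpre : e ⁻¹' S = {p | IsParetoPoint p i} := by
    ext p
    have hep : e p = (p i, fun j => p (i.succAbove j)) := rfl
    simp only [mem_preimage, hep, hS, mem_setOf_eq, IsParetoPoint]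
    constructor
    · intro h j hj
      rcases eq_or_ne j i with rfl | hne
      · exact absurd hj (lt_irrefl _)
      · obtain ⟨j', rfl⟩ := Fin.exists_succAbove_eq hne
        exact h j' hj
    · intro h j hj
      exact h _ hj
  have key : Measure.pi (fun _ : Fin (n+1) => paretoEta) {p | IsParetoPoint p i}
      = (paretoEta.prod π') S := by
    rw [← hpre]
    exact hmp.measure_preimage hSmeas.nullMeasurableSet
  rw [key, Measure.prod_apply hSmeas]
  have hsec : ∀ x : ℝ × ℝ, Prod.mk x ⁻¹' S
      = Set.pi univ (fun _ : Fin n => {q : ℝ × ℝ | q.2 > x.2 → x.1 > q.1}) := by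
    intro x
    ext y
    simp [hS, Set.mem_pi]
  have hpicalc : ∀ x : ℝ × ℝ, π' (Prod.mk x ⁻¹' S)
      = paretoEta {q : ℝ × ℝ | q.2 > x.2 → x.1 > q.1} ^ n := by
    intro x
    rw [hsec x, hπ', Measure.pi_pi, Finset.prod_const, Finset.card_univ, Fintype.card_fin]
  simp_rw [hpicalc]
  have hae : ∀ᵐ x ∂paretoEta, x ∈ Ioo (0:ℝ) 1 ×ˢ Ioo (0:ℝ) 1 := by
    have : paretoEta = (volume.prod volume).restrict (Ioo (0:ℝ) 1 ×ˢ Ioo (0:ℝ) 1) := by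
      rw [paretoEta, paretoUnif, Measure.prod_restrict]
    rw [this]
    exact ae_restrict_mem (measurableSet_Ioo.prod measurableSet_Ioo)
  set g : ℝ × ℝ → ℝ := fun x => (1 - (1 - x.1) * (1 - x.2))^n with hg
  have hgcont : Continuous g := by
    apply Continuous.pow
    continuity
  have hbound : ∀ x ∈ Ioo (0:ℝ) 1 ×ˢ Ioo (0:ℝ) 1, 0 ≤ 1 - (1 - x.1) * (1 - x.2) ∧
      1 - (1 - x.1) * (1 - x.2) ≤ 1 := by
    rintro x ⟨⟨h11, h12⟩, h21, h22⟩
    constructor <;> nlinarith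
  have hcong : ∀ᵐ x ∂paretoEta, paretoEta {q : ℝ × ℝ | q.2 > x.2 → x.1 > q.1} ^ n
      = ENNReal.ofReal (g x) := by
    filter_upwards [hae] with x hx
    rw [paretoAux_eta_A hx, ← ENNReal.ofReal_pow (hbound x hx).1]
  rw [lintegral_congr_ae hcong]
  have hint : Integrable g paretoEta := by
    refine Integrable.mono' (integrable_const (1:ℝ)) hgcont.aestronglyMeasurable ?_
    filter_upwards [hae] with x hx
    have := hbound x hx
    rw [Real.norm_eq_abs, abs_of_nonneg (pow_nonneg this.1 n)]
    exact pow_le_one₀ this.1 this.2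
  have hnn : 0 ≤ᵐ[paretoEta] g := by
    filter_upwards [hae] with x hx
    exact pow_nonneg (hbound x hx).1 n
  rw [← MeasureTheory.ofReal_integral_eq_lintegral_ofReal hint hnn]
  congr 1
  rw [paretoEta, MeasureTheory.integral_prod _ hint]
  have inner_eq : ∀ F : ℝ → ℝ, ∫ x, F x ∂paretoUnif = ∫ x in (0:ℝ)..1, F x := by
    intro F
    rw [paretoUnif, intervalIntegral.integral_of_le zero_le_one,
      MeasureTheory.integral_Ioc_eq_integral_Ioo]
  rw [inner_eq]
  have : ∀ a : ℝ, ∫ b, g (a, b) ∂paretoUnif = ∫ b in (0:ℝ)..1, g (a, b) :=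
    fun a => inner_eq _
  rw [intervalIntegral.integral_congr (g := fun a => ∫ b in (0:ℝ)..1, g (a, b))
    (fun a _ => this a)]
  exact paretoAux_outer_int' n

lemma paretoAux_card_eq_sum {N : ℕ} (p : Fin N → ℝ × ℝ) :
    (paretoCard p : ℝ) = ∑ i : Fin N,
      Set.indicator {j : Fin N | IsParetoPoint p j} (fun _ => (1:ℝ)) i := by
  classical
  rw [paretoCard, Set.ncard_eq_toFinset_card', Set.toFinset_setOf, Finset.card_filter]
  push_cast
  exact Finset.sum_congr rfl fun i _ => by simp [Set.indicator_apply]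

lemma paretoAux_expectation_eq {Ω : Type*} [MeasurableSpace Ω] (μ : Measure Ω)
    [IsProbabilityMeasure μ]
    (X : ℕ → Ω → ℝ × ℝ) (hX : ∀ i, Measurable (X i)) (N : ℕ) :
    ∫ ω, (paretoCard (fun i : Fin N => X i ω) : ℝ) ∂μ
      = ∑ i : Fin N, (μ {ω | IsParetoPoint (fun k : Fin N => X k ω) i}).toReal := by
  classical
  have hYmeas : Measurable (fun ω (i : Fin N) => X i ω) :=
    measurable_pi_lambda _ (fun i => hX i)
  have hEmeas : ∀ i : Fin N,
      MeasurableSet {ω | IsParetoPoint (fun k : Fin N => X k ω) i} :=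
    fun i => hYmeas (paretoAux_measurableSet_pareto i)
  have hptw : ∀ ω, (paretoCard (fun i : Fin N => X i ω) : ℝ)
      = ∑ i : Fin N, Set.indicator {ω | IsParetoPoint (fun k : Fin N => X k ω) i}
          (fun _ => (1:ℝ)) ω := by
    intro ω
    rw [paretoAux_card_eq_sum]
    refine Finset.sum_congr rfl fun i _ => ?_
    simp only [Set.indicator_apply, mem_setOf_eq]
  simp_rw [hptw]
  rw [MeasureTheory.integral_finset_sum _ (fun i _ =>
    (integrable_const (1:ℝ)).indicator (hEmeas i))]
  refine Finset.sum_congr rfl fun i _ => ?_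
  rw [MeasureTheory.integral_indicator_const _ (hEmeas i)]
  simp
  rfl

lemma paretoAux_harmonic_nonneg {n : ℕ} : (0:ℚ) ≤ harmonic n := by
  unfold harmonic
  positivity

lemma paretoAux_harmonic_isTheta :
    (fun N : ℕ => (harmonic N : ℝ)) =Θ[atTop] (fun N : ℕ => Real.log N) := by
  have hlog3 : 1 < Real.log 3 := by
    rw [Real.lt_log_iff_exp_lt (by norm_num)]
    calc Real.exp 1 < 2.7182818286 := Real.exp_one_lt_d9
      _ < 3 := by norm_num
  constructor
  · rw [Asymptotics.isBigO_iff]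
    refine ⟨2, ?_⟩
    filter_upwards [eventually_ge_atTop 3] with N hN
    have hN1 : (1:ℝ) ≤ N := by exact_mod_cast le_trans (by norm_num) hN
    have hlogN : 1 < Real.log N := lt_of_lt_of_le hlog3
      (Real.log_le_log (by norm_num) (by exact_mod_cast hN))
    have h1 : (harmonic N : ℝ) ≤ 1 + Real.log N := harmonic_le_one_add_log N
    have h2 : (0:ℝ) ≤ harmonic N := by exact_mod_cast (paretoAux_harmonic_nonneg (n := N))
    rw [Real.norm_eq_abs, Real.norm_eq_abs, abs_of_nonneg h2,
      abs_of_nonneg (by linarith : (0:ℝ) ≤ Real.log N)]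
    linarith
  · rw [Asymptotics.isBigO_iff]
    refine ⟨1, ?_⟩
    filter_upwards [eventually_ge_atTop 1] with N hN
    have hN1 : (1:ℝ) ≤ N := by exact_mod_cast hN
    have h1 : Real.log N ≤ Real.log (N + 1) :=
      Real.log_le_log (by linarith) (by linarith)
    have h2 : Real.log (↑(N + 1)) ≤ (harmonic N : ℝ) := log_add_one_le_harmonic N
    have h3 : (0:ℝ) ≤ Real.log N := Real.log_nonneg hN1
    rw [Real.norm_eq_abs, Real.norm_eq_abs, abs_of_nonneg h3, one_mul,
      abs_of_nonneg (by exact_mod_cast (paretoAux_harmonic_nonneg (n := N)) :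
        (0:ℝ) ≤ (harmonic N : ℝ))]
    push_cast at h2
    linarith


/-- For i.i.d. samples `(U_i, V_i)` with `U_i` independent of `V_i`, Lipschitz joint CDF,
and invertible marginal CDFs (so the copula is `C(u,v) = uv`), the expected size of the
Pareto set of the first `N` samples is `Θ(log N)`. -/
theorem expected_pareto_card_independent_coords
    {Ω : Type*} [MeasurableSpace Ω] (μ : Measure Ω) [IsProbabilityMeasure μ]
    (W : ℕ → Ω → ℝ × ℝ) (hWmeas : ∀ i, Measurable (W i))
    (hindep : iIndepFun W μ)
    (hident : ∀ i, IdentDistrib (W i) (W 0) μ μ)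
    -- for each sample, the two coordinates are independent
    (hcoord : ∀ i, IndepFun (fun ω => (W i ω).1) (fun ω => (W i ω).2) μ)
    (F : ℝ → ℝ → ℝ) (FU FV : ℝ → ℝ)
    -- F is the joint CDF and FU, FV the marginal CDFs of the common distribution
    (hF : ∀ u v, F u v = (μ {ω | (W 0 ω).1 ≤ u ∧ (W 0 ω).2 ≤ v}).toReal)
    (hFU : ∀ u, FU u = (μ {ω | (W 0 ω).1 ≤ u}).toReal)
    (hFV : ∀ v, FV v = (μ {ω | (W 0 ω).2 ≤ v}).toReal)
    -- the joint CDF is Lipschitz continuous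
    (hLip : ∃ K : NNReal, LipschitzWith K (fun p : ℝ × ℝ => F p.1 p.2))
    -- the marginal CDFs are invertible (strictly monotone bijections onto (0,1))
    (hFUmono : StrictMono FU) (hFUrange : Set.range FU = Set.Ioo 0 1)
    (hFVmono : StrictMono FV) (hFVrange : Set.range FV = Set.Ioo 0 1) :
    (fun N : ℕ => ∫ ω, (paretoCard (fun i : Fin N => W i ω) : ℝ) ∂μ)
      =Θ[atTop] (fun N : ℕ => Real.log N) := by
    classical
  -- transformed (uniformized) samples
  set X : ℕ → Ω → ℝ × ℝ := fun i ω => (FU ((W i ω).1), FV ((W i ω).2)) with hXdef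
  have hFUmeas : Measurable FU := hFUmono.monotone.measurable
  have hFVmeas : Measurable FV := hFVmono.monotone.measurable
  have hphi : Measurable (fun q : ℝ × ℝ => (FU q.1, FV q.2)) :=
    (hFUmeas.comp measurable_fst).prodMk (hFVmeas.comp measurable_snd)
  have hXmeas : ∀ i, Measurable (X i) := fun i => hphi.comp (hWmeas i)
  have hXindep : iIndepFun X μ :=
    hindep.comp (fun _ => fun q : ℝ × ℝ => (FU q.1, FV q.2)) (fun _ => hphi)
  have hlawU : μ.map (fun ω => FU ((W 0 ω).1)) = paretoUnif :=
    paretoAux_map_eq_unif μ (fun ω => (W 0 ω).1) (hWmeas 0).fst FU hFUmono hFUrange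
      (fun b => (hFU b).symm)
  have hlawV : μ.map (fun ω => FV ((W 0 ω).2)) = paretoUnif :=
    paretoAux_map_eq_unif μ (fun ω => (W 0 ω).2) (hWmeas 0).snd FV hFVmono hFVrange
      (fun b => (hFV b).symm)
  have hindep0 : IndepFun (fun ω => FU ((W 0 ω).1)) (fun ω => FV ((W 0 ω).2)) μ :=
    (hcoord 0).comp hFUmeas hFVmeas
  have hlaw0 : μ.map (X 0) = paretoEta := by
    have h := (indepFun_iff_map_prod_eq_prod_map_map
      ((hFUmeas.comp (hWmeas 0).fst).aemeasurable)
      ((hFVmeas.comp (hWmeas 0).snd).aemeasurable)).mp hindep0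
    calc μ.map (X 0)
        = (μ.map (fun ω => FU ((W 0 ω).1))).prod (μ.map (fun ω => FV ((W 0 ω).2))) := h
      _ = paretoEta := by rw [hlawU, hlawV, paretoEta]
  have hlaw : ∀ i, μ.map (X i) = paretoEta := by
    intro i
    have h1 : IdentDistrib (X i) (X 0) μ μ :=
      (hident i).comp hphi
    rw [← hlaw0]
    exact h1.map_eq
  have hmap : ∀ N : ℕ, μ.map (fun ω (i : Fin N) => X i ω)
      = Measure.pi (fun _ : Fin N => paretoEta) :=
    fun N => paretoAux_map_pi μ X hXmeas hXindep paretoEta hlaw N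
  -- Pareto count is invariant under the monotone coordinate transforms
  have hcardeq : ∀ (N : ℕ) (ω : Ω),
      paretoCard (fun i : Fin N => W i ω) = paretoCard (fun i : Fin N => X i ω) := by
    intro N ω
    unfold paretoCard
    congr 1
    ext i
    simp only [mem_setOf_eq, IsParetoPoint, hXdef]
    refine forall_congr' fun j => ?_
    exact ⟨fun h hj => (hFUmono.lt_iff_lt).2 (h ((hFVmono.lt_iff_lt).1 hj)),
      fun h hj => (hFUmono.lt_iff_lt).1 (h ((hFVmono.lt_iff_lt).2 hj))⟩
  -- the expectation equals the harmonic number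
  have hval : ∀ N : ℕ, ∫ ω, (paretoCard (fun i : Fin N => W i ω) : ℝ) ∂μ
      = (harmonic N : ℝ) := by
    intro N
    have h1 : ∫ ω, (paretoCard (fun i : Fin N => W i ω) : ℝ) ∂μ
        = ∫ ω, (paretoCard (fun i : Fin N => X i ω) : ℝ) ∂μ :=
      integral_congr_ae (Eventually.of_forall fun ω =>
        congrArg (fun n : ℕ => (n : ℝ)) (hcardeq N ω))
    rw [h1, paretoAux_expectation_eq μ X hXmeas N]
    have hev : ∀ i : Fin N, μ {ω | IsParetoPoint (fun k : Fin N => X k ω) i}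
        = Measure.pi (fun _ : Fin N => paretoEta) {p | IsParetoPoint p i} := by
      intro i
      have hma := Measure.map_apply (μ := μ) (f := fun ω (k : Fin N) => X k ω)
        (measurable_pi_lambda _ (fun k => hXmeas k)) (paretoAux_measurableSet_pareto i)
      rw [← hmap N]
      exact hma.symm
    simp_rw [hev]
    cases N with
    | zero => simp [harmonic_zero]
    | succ n =>
      have hterm : ∀ i : Fin (n+1),
          (Measure.pi (fun _ : Fin (n+1) => paretoEta) {p | IsParetoPoint p i}).toReal
            = (harmonic (n+1) : ℝ) / (n+1) := by
        intro i
        rw [paretoAux_prob n i, ENNReal.toReal_ofReal]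
        have := paretoAux_harmonic_nonneg (n := n+1)
        positivity
      rw [Finset.sum_congr rfl (fun i _ => hterm i), Finset.sum_const, Finset.card_univ,
        Fintype.card_fin, nsmul_eq_mul]
      field_simp
      push_cast
      ring
  have heq : (fun N : ℕ => ∫ ω, (paretoCard (fun i : Fin N => W i ω) : ℝ) ∂μ)
      = fun N : ℕ => (harmonic N : ℝ) := funext hval
  rw [heq]
  exact paretoAux_harmonic_isTheta
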